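/- If σ ∈ L²(T) satisfies σ̃(ξ) ≠ 0 for all ξ ∈ (2π/N)ℤ³ \ 2πℤ³, then the Wiener condition holds: the matrix Σ(θ) = ∑_{m∈ℤ³}[(ξ⊗ξ/|ξ|²)|σ̃(ξ)|²]_{ξ=θ+2πm} is positive definite for every θ ∈ (2π/N)ℤ³ \ 2πℤ³. -/

import Mathlib

open Complex Finset Matrix

noncomputable def waveVec (N : ℕ) (k : Fin 3 → ℤ) : Fin 3 → ℝ :=
  fun i => 2 * Real.pi / (N : ℝ) * (k i : ℝ)

noncomputable def SigmaMat (c : (Fin 3 → ℝ) → ℂ) (θ : Fin 3 → ℝ) :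
    Matrix (Fin 3) (Fin 3) ℝ :=
  fun a b => ∑' m : Fin 3 → ℤ,
    (θ a + 2 * Real.pi * (m a : ℝ)) * (θ b + 2 * Real.pi * (m b : ℝ)) /
        (∑ i, (θ i + 2 * Real.pi * (m i : ℝ)) ^ 2) *
      ‖c (fun i => θ i + 2 * Real.pi * (m i : ℝ))‖ ^ 2

/-- If the Fourier coefficients of `σ ∈ L²(T)` do not vanish on `(2π/N)ℤ³ \ 2πℤ³`, then
the Wiener condition holds: `Σ(θ)` is positive definite for every
`θ ∈ (2π/N)ℤ³ \ 2πℤ³`. -/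
theorem stmt_7 (N : ℕ) (hN : 0 < N) (c : (Fin 3 → ℝ) → ℂ)
    (hL2 : Summable fun k : Fin 3 → ℤ => ‖c (waveVec N k)‖ ^ 2)
    (hnz : ∀ k : Fin 3 → ℤ, ¬ (∀ i, (N : ℤ) ∣ k i) → c (waveVec N k) ≠ 0) :
    ∀ k₀ : Fin 3 → ℤ, ¬ (∀ i, (N : ℤ) ∣ k₀ i) →
      (SigmaMat c (waveVec N k₀)).PosDef := by
  intro k₀ hk₀
  have hNR : (N : ℝ) ≠ 0 := Nat.cast_ne_zero.mpr hN.ne'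
  set θ : Fin 3 → ℝ := waveVec N k₀ with hθ
  set F : (Fin 3 → ℤ) → Fin 3 → ℝ := fun m i => θ i + 2 * Real.pi * (m i : ℝ) with hFdef
  set Q : (Fin 3 → ℤ) → ℝ := fun m => ∑ i, F m i ^ 2 with hQdef
  set w : (Fin 3 → ℤ) → ℝ := fun m => ‖c (F m)‖ ^ 2 with hwdef
  -- F m = waveVec N (k₀ + N • m)
  have hF : ∀ m : Fin 3 → ℤ, F m = waveVec N (fun i => k₀ i + N * m i) := by
    intro m
    funext i
    simp only [hFdef, hθ, waveVec]
    push_cast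
    field_simp
  have hdvd : ∀ m : Fin 3 → ℤ, ¬ (∀ i, (N : ℤ) ∣ (k₀ i + N * m i)) := by
    intro m h
    exact hk₀ fun i => (dvd_add_left (Dvd.intro (m i) rfl)).mp (h i)
  -- positivity of denominator
  have hQ : ∀ m, 0 < Q m := by
    intro m
    rcases (Finset.sum_nonneg fun i (_ : i ∈ Finset.univ) =>
        sq_nonneg (F m i)).lt_or_eq with h | h
    · exact h
    · exfalso
      apply hdvd m
      intro i
      have hzero : F m i ^ 2 = 0 := by
        have := (Finset.sum_eq_zero_iff_of_nonneg
          (fun i _ => sq_nonneg (F m i))).mp h.symm i (Finset.mem_univ i)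
        exact this
      have hFi : F m i = 0 := by
        have := sq_eq_zero_iff.mp hzero
        exact this
      have hcast : ((k₀ i + N * m i : ℤ) : ℝ) = 0 := by
        have h2 : (2 * Real.pi / N) * ((k₀ i + N * m i : ℤ) : ℝ) = 0 := by
          rw [hF m] at hFi
          simpa [waveVec] using hFi
        have hNpos : (0:ℝ) < N := Nat.cast_pos.mpr hN
        have hpi : (2 * Real.pi / N) ≠ 0 := by positivity
        exact (mul_eq_zero.mp h2).resolve_left hpi
      have : (k₀ i + N * m i : ℤ) = 0 := by exact_mod_cast hcast
      exact this ▸ dvd_zero _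
  -- nonvanishing of coefficients
  have hcne : ∀ m, c (F m) ≠ 0 := fun m => by
    rw [hF m]; exact hnz _ (hdvd m)
  have hwpos : ∀ m, 0 < w m := fun m =>
    pow_pos (norm_pos_iff.mpr (hcne m)) 2
  -- summability of the weights
  have hw : Summable w := by
    have hinj : Function.Injective (fun m : Fin 3 → ℤ => fun i => k₀ i + N * m i) := by
      intro m m' h
      funext i
      have := congrFun h i
      simp only at this
      have hNZ : (N : ℤ) ≠ 0 := Int.natCast_ne_zero.mpr hN.ne'
      have : (N : ℤ) * m i = (N : ℤ) * m' i := by linarith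
      exact mul_left_cancel₀ hNZ this
    have := hL2.comp_injective hinj
    refine this.congr fun m => ?_
    simp only [Function.comp, hwdef, hF m]
  -- bound on the quotient
  have hbound : ∀ m (a b : Fin 3), |F m a * F m b / Q m| ≤ 1 := by
    intro m a b
    rw [abs_div, abs_of_pos (hQ m), div_le_one (hQ m)]
    have h1 : F m a ^ 2 ≤ Q m :=
      Finset.single_le_sum (fun i _ => sq_nonneg (F m i)) (Finset.mem_univ a)
    have h2 : F m b ^ 2 ≤ Q m :=
      Finset.single_le_sum (fun i _ => sq_nonneg (F m i)) (Finset.mem_univ b)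
    have := abs_mul (F m a) (F m b)
    nlinarith [sq_nonneg (|F m a| - |F m b|), _root_.sq_abs (F m a), _root_.sq_abs (F m b),
      abs_nonneg (F m a), abs_nonneg (F m b)]
  -- entrywise summability
  have hsum : ∀ a b : Fin 3, Summable fun m => F m a * F m b / Q m * w m := by
    intro a b
    refine Summable.of_norm_bounded hw fun m => ?_
    rw [Real.norm_eq_abs, abs_mul, _root_.abs_of_nonneg (hwpos m).le]
    calc |F m a * F m b / Q m| * w m ≤ 1 * w m :=
          mul_le_mul_of_nonneg_right (hbound m a b) (hwpos m).le
      _ = w m := one_mul _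
  have hMat : ∀ a b, SigmaMat c θ a b = ∑' m, F m a * F m b / Q m * w m := by
    intro a b; rfl
  rw [posDef_iff_dotProduct_mulVec]
  constructor
  · -- Hermitian
    ext a b
    simp only [conjTranspose_apply, star_trivial, hMat]
    exact tsum_congr fun m => by ring
  · -- positivity
    intro x hx
    -- per-m summand after pairing with x
    set g : (Fin 3 → ℤ) → ℝ := fun m => (∑ a, x a * F m a) ^ 2 / Q m * w m with hgdef
    have halg : ∀ m, ∑ a, ∑ b, x a * (F m a * F m b / Q m * w m * x b) = g m := by
      intro m
      simp only [hgdef, Fin.sum_univ_three]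
      field_simp
    have hsum2 : ∀ a b : Fin 3,
        Summable fun m => x a * (F m a * F m b / Q m * w m * x b) := by
      intro a b
      have := ((hsum a b).mul_right (x b)).mul_left (x a)
      refine this.congr fun m => ?_
      ring
    have hkey : star x ⬝ᵥ (SigmaMat c θ *ᵥ x) = ∑' m, g m := by
      have : star x ⬝ᵥ (SigmaMat c θ *ᵥ x)
          = ∑ a, ∑ b, x a * (SigmaMat c θ a b * x b) := by
        simp [dotProduct, mulVec, Finset.mul_sum]
      rw [this]
      have hstep : ∀ a b : Fin 3, x a * (SigmaMat c θ a b * x b)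
          = ∑' m, x a * (F m a * F m b / Q m * w m * x b) := by
        intro a b
        rw [hMat a b, ← tsum_mul_right, ← tsum_mul_left]
      calc ∑ a, ∑ b, x a * (SigmaMat c θ a b * x b)
          = ∑ a, ∑ b, ∑' m, x a * (F m a * F m b / Q m * w m * x b) := by
            refine Finset.sum_congr rfl fun a _ => Finset.sum_congr rfl fun b _ => hstep a b
        _ = ∑ a, ∑' m, ∑ b, x a * (F m a * F m b / Q m * w m * x b) :=
            Finset.sum_congr rfl fun a _ => (Summable.tsum_finsetSum fun b _ => hsum2 a b).symm
        _ = ∑' m, ∑ a, ∑ b, x a * (F m a * F m b / Q m * w m * x b) :=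
            (Summable.tsum_finsetSum fun a _ => summable_sum fun b _ => hsum2 a b).symm
        _ = ∑' m, g m := tsum_congr halg
    rw [hkey]
    -- summability of g
    have hgsum : Summable g := by
      have : Summable fun m => ∑ a, ∑ b, x a * (F m a * F m b / Q m * w m * x b) := by
        exact summable_sum fun a _ => summable_sum fun b _ => hsum2 a b
      exact this.congr halg
    have hgnonneg : ∀ m, 0 ≤ g m := by
      intro m
      have := hQ m
      have := hwpos m
      positivity
    -- find m₀ with nonzero pairing
    obtain ⟨i, hi⟩ : ∃ i, x i ≠ 0 := Function.ne_iff.mp hx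
    have hkey2 : ∃ m₀, (∑ a, x a * F m₀ a) ≠ 0 := by
      by_contra h
      push_neg at h
      have h0 := h 0
      have h1 := h (Pi.single i 1)
      have hdiff : ∑ a, x a * F (Pi.single i 1) a
          = (∑ a, x a * F 0 a) + 2 * Real.pi * x i := by
        simp only [hFdef]
        rw [Fin.sum_univ_three, Fin.sum_univ_three]
        fin_cases i <;> simp [Pi.single_apply] <;> ring
      rw [h0, h1] at hdiff
      have : x i = 0 := by
        have hpi := Real.pi_ne_zero
        field_simp at hdiff
        rcases mul_eq_zero.mp (by linarith : 2 * Real.pi * x i = 0) with h2 | h2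
        · exact absurd ((mul_eq_zero.mp h2).resolve_left two_ne_zero) hpi
        · exact h2
      exact hi this
    obtain ⟨m₀, hm₀⟩ := hkey2
    have hgpos : 0 < g m₀ := by
      have hs : 0 < (∑ a, x a * F m₀ a) ^ 2 :=
        lt_of_le_of_ne (sq_nonneg _) (Ne.symm (pow_ne_zero 2 hm₀))
      simp only [hgdef]
      exact mul_pos (div_pos hs (hQ m₀)) (hwpos m₀)
    exact Summable.tsum_pos hgsum hgnonneg m₀ hgpos
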